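/- Fix an integer d ≥ 2 and let m = d − 2. For every n ≥ 0, the corridor number c^{(m)}_n satisfies c^{(m)}_n = σ_{n,⌊n/2⌋} − σ_{n,⌊(n+d)/2⌋}, where σ is the circular Pascal array of order d. -/

import Mathlib

/-- Binomial coefficient `C(n,x)` with integer lower argument, zero when `x < 0` or `x > n`. -/
noncomputable def binomZ (n : ℕ) (x : ℤ) : ℕ := if 0 ≤ x then n.choose x.toNat else 0

/-- Circular Pascal array of order `d` with initial offset `y0`:
`σ_{n,k} = Σ_{i=0}^{y0} Σ_{j∈ℤ} C(n, k − i + d·j)`. -/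
noncomputable def circPascal (d y0 n : ℕ) (k : ℤ) : ℕ :=
  ∑ i ∈ Finset.range (y0 + 1), ∑ᶠ j : ℤ, binomZ n (k - i + d * j)

/-- Corridor number of order `m`: the number of ±1 sequences of length `n` all of whose
partial sums, shifted by `y0`, stay in `{0,…,m}`. -/
noncomputable def corridorCount (m n y0 : ℕ) : ℕ :=
  Nat.card {r : Fin n → ℤ // (∀ i, r i = 1 ∨ r i = -1) ∧
    ∀ j : Fin n, 0 ≤ (y0 : ℤ) + ∑ i ∈ Finset.Iic j, r i ∧
      (y0 : ℤ) + ∑ i ∈ Finset.Iic j, r i ≤ (m : ℤ)}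
noncomputable def T (d n : ℕ) (x : ℤ) : ℕ := ∑ᶠ j : ℤ, binomZ n (x + d * j)

lemma binomZ_eq_zero {n : ℕ} {x : ℤ} (h : x < 0 ∨ (n:ℤ) < x) : binomZ n x = 0 := by
  unfold binomZ
  rcases h with h | h
  · simp [not_le.mpr h]
  · split
    · apply Nat.choose_eq_zero_of_lt; omega
    · rfl

lemma binomZ_succ (n : ℕ) (x : ℤ) : binomZ (n+1) x = binomZ n x + binomZ n (x-1) := by
  rcases lt_trichotomy x 0 with h | h | h
  · rw [binomZ_eq_zero (Or.inl h), binomZ_eq_zero (Or.inl h),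
      binomZ_eq_zero (Or.inl (by omega))]
  · subst h
    rw [binomZ_eq_zero (n := n) (x := (0:ℤ)-1) (Or.inl (by omega))]
    simp [binomZ]
  · obtain ⟨k, rfl⟩ : ∃ k : ℕ, x = (k:ℤ) + 1 := ⟨(x-1).toNat, by omega⟩
    have h1 : ((k:ℤ)+1).toNat = k + 1 := by omega
    have h2 : ((k:ℤ)+1-1).toNat = k := by omega
    simp only [binomZ, h1, h2, if_pos (by omega : (0:ℤ) ≤ (k:ℤ)+1),
      if_pos (by omega : (0:ℤ) ≤ (k:ℤ)+1-1)]
    rw [Nat.choose_succ_succ']; omega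

lemma binomZ_symm (n : ℕ) (x : ℤ) : binomZ n x = binomZ n ((n:ℤ) - x) := by
  rcases lt_trichotomy x 0 with h | h | h
  · rw [binomZ_eq_zero (Or.inl h), binomZ_eq_zero (Or.inr (by omega))]
  · subst h; simp [binomZ]
  · rcases le_or_gt x n with h2 | h2
    · obtain ⟨k, rfl⟩ : ∃ k : ℕ, x = (k:ℤ) := ⟨x.toNat, by omega⟩
      have hk : k ≤ n := by omega
      have h3 : ((n:ℤ) - k).toNat = n - k := by omega
      simp only [binomZ, h3, Int.toNat_natCast, if_pos (by omega : (0:ℤ) ≤ (n:ℤ) - k),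
        if_pos (le_of_lt h)]
      rw [Nat.choose_symm hk]
    · rw [binomZ_eq_zero (Or.inr h2), binomZ_eq_zero (Or.inl (by omega))]

lemma outside_zero {d n : ℕ} (hd : 1 ≤ d) {x j : ℤ} (hj : (x.natAbs : ℤ) + n + 1 < j.natAbs) :
    binomZ n (x + d * j) = 0 := by
  have hd' : (1:ℤ) ≤ (d:ℤ) := by exact_mod_cast hd
  apply binomZ_eq_zero
  rcases le_or_gt 0 j with h | h
  · have h1 : j ≤ (d:ℤ) * j := le_mul_of_one_le_left h hd'
    right; omega
  · have h1 : (d:ℤ) * j ≤ j := by nlinarith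
    left; omega

lemma T_window {d : ℕ} (hd : 1 ≤ d) (n : ℕ) (x : ℤ) {B : ℤ}
    (hB : (x.natAbs : ℤ) + n + 1 ≤ B) :
    T d n x = ∑ j ∈ Finset.Icc (-B) B, binomZ n (x + d * j) := by
  apply finsum_eq_finset_sum_of_support_subset
  intro j hj
  simp only [Function.mem_support, ne_eq] at hj
  simp only [Finset.coe_Icc, Set.mem_Icc]
  by_contra hc
  exact hj (outside_zero hd (show ((x.natAbs:ℤ) + n + 1 < j.natAbs) by omega))

lemma T_pascal {d : ℕ} (hd : 1 ≤ d) (n : ℕ) (x : ℤ) :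
    T d (n+1) x = T d n x + T d n (x-1) := by
  rw [T_window hd (n+1) x (B := (x.natAbs : ℤ) + n + 3) (by push_cast; omega),
      T_window hd n x (B := (x.natAbs : ℤ) + n + 3) (by omega),
      T_window hd n (x-1) (B := (x.natAbs : ℤ) + n + 3) (by omega),
      ← Finset.sum_add_distrib]
  apply Finset.sum_congr rfl
  intro j _
  rw [binomZ_succ]
  congr 1
  ring_nf

lemma T_period (d n : ℕ) (x : ℤ) : T d n (x + d) = T d n x := by
  calc T d n (x + d) = ∑ᶠ j : ℤ, binomZ n (x + d * (j + 1)) := by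
        apply finsum_congr; intro j; congr 1; ring
    _ = ∑ᶠ j : ℤ, binomZ n (x + d * j) := finsum_comp_equiv (Equiv.addRight (1:ℤ)) (f := fun j => binomZ n (x + d * j))
    _ = T d n x := rfl

lemma T_symm (d n : ℕ) (x : ℤ) : T d n x = T d n ((n:ℤ) - x) := by
  unfold T
  calc (∑ᶠ j : ℤ, binomZ n (x + d * j))
      = ∑ᶠ j : ℤ, binomZ n ((n:ℤ) - x + d * (-j)) := by
        apply finsum_congr; intro j
        rw [binomZ_symm n (x + d * j)]; congr 1; ring
    _ = ∑ᶠ j : ℤ, binomZ n ((n:ℤ) - x + d * j) := finsum_comp_equiv (Equiv.neg ℤ) (f := fun j => binomZ n ((n:ℤ) - x + d * j))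
noncomputable def H (d n : ℕ) (l r : ℤ) : ℕ := ∑ x ∈ Finset.Icc l r, T d n x

lemma H_empty (d n : ℕ) {l r : ℤ} (h : r < l) : H d n l r = 0 := by
  unfold H
  rw [Finset.Icc_eq_empty (by omega)]
  rfl

lemma H_pascal {d : ℕ} (hd : 1 ≤ d) (n : ℕ) (l r : ℤ) :
    H d (n+1) l r = H d n l r + H d n (l-1) (r-1) := by
  unfold H
  rw [show Finset.Icc (l-1) (r-1) = (Finset.Icc l r).map (addRightEmbedding (-1)) by
    rw [Finset.map_add_right_Icc]; congr 1 <;> ring]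
  rw [Finset.sum_map, ← Finset.sum_add_distrib]
  apply Finset.sum_congr rfl
  intro x _
  rw [T_pascal hd]
  have hx : addRightEmbedding (-1) x = x - 1 := by
    simp only [addRightEmbedding, Function.Embedding.coeFn_mk]; ring
  rw [hx]

lemma H_extend_left (d n : ℕ) {l r : ℤ} (h : l ≤ r + 1) :
    H d n (l-1) r = T d n (l-1) + H d n l r := by
  unfold H
  rw [show Finset.Icc (l-1) r = insert (l-1) (Finset.Icc l r) by
    ext z; simp [Finset.mem_Icc, Finset.mem_insert]; omega]
  rw [Finset.sum_insert (by simp only [Finset.mem_Icc]; omega)]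

lemma H_swap (d n : ℕ) {l r : ℤ} (h : l ≤ r) :
    H d n l r + H d n (l-1) (r-1) = H d n (l-1) r + H d n l (r-1) := by
  rw [H_extend_left d n (by omega : l ≤ r + 1),
      H_extend_left d n (by omega : l ≤ (r-1) + 1)]
  ring

lemma H_shift_one {d : ℕ} (hd : 1 ≤ d) (n : ℕ) (l : ℤ) :
    H d n l (l + d - 1) = H d n (l + 1) (l + d) := by
  have h1 : H d n l (l + d - 1) = T d n l + H d n (l+1) (l + d - 1) := by
    have := H_extend_left d n (l := l + 1) (r := l + d - 1) (by omega)
    simpa using this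
  have h2 : H d n (l+1) (l + d) = H d n (l+1) (l + d - 1) + T d n (l + d) := by
    unfold H
    rw [show Finset.Icc (l+1) (l+d) = insert (l+d) (Finset.Icc (l+1) (l+d-1)) by
      ext z; simp [Finset.mem_Icc, Finset.mem_insert]; omega]
    rw [Finset.sum_insert (by simp only [Finset.mem_Icc]; omega)]
    ring
  have h3 : T d n (l + d) = T d n l := by
    have := T_period d n l
    simpa using this
  omega

lemma H_shift {d : ℕ} (hd : 1 ≤ d) (n : ℕ) (l : ℤ) (k : ℕ) :
    H d n l (l + d - 1) = H d n (l + k) (l + k + d - 1) := by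
  induction k with
  | zero => simp
  | succ k ih =>
      rw [ih, H_shift_one hd]
      congr 1 <;> push_cast <;> ring

/-- The closed form for corridor counts: difference of two blocks of `T`-values. -/
noncomputable def G (d n : ℕ) (y : ℤ) : ℤ :=
  (H d n ((n - y + 1)/2) ((n + y + 1)/2) : ℤ) - (H d n ((n + d - y)/2) ((n + d + y)/2) : ℤ)

lemma G_neg_one (d n : ℕ) : G d n (-1) = 0 := by
  unfold G
  rw [H_empty d n (by omega), H_empty d n (by omega)]
  simp

lemma G_top {d : ℕ} (hd : 2 ≤ d) (n : ℕ) : G d n ((d:ℤ) - 1) = 0 := by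
  unfold G
  have hd1 : 1 ≤ d := by omega
  set l₁ : ℤ := ((n:ℤ) - ((d:ℤ)-1) + 1)/2 with hl₁
  set l₂ : ℤ := ((n:ℤ) + d - ((d:ℤ)-1))/2 with hl₂
  have e₁ : ((n:ℤ) + ((d:ℤ)-1) + 1)/2 = l₁ + d - 1 := by omega
  have e₂ : ((n:ℤ) + d + ((d:ℤ)-1))/2 = l₂ + d - 1 := by omega
  have hk : l₁ ≤ l₂ := by omega
  rw [e₁, e₂]
  have := H_shift hd1 n l₁ (l₂ - l₁).toNat
  rw [show l₁ + ((l₂ - l₁).toNat : ℤ) = l₂ by omega] at this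
  rw [this]
  simp

lemma G_rec {d : ℕ} (hd : 1 ≤ d) (n : ℕ) {y : ℤ} (hy : 0 ≤ y) :
    G d (n+1) y = G d n (y+1) + G d n (y-1) := by
  unfold G
  have c1 : ((n+1:ℕ):ℤ) = (n:ℤ) + 1 := by push_cast; ring
  rw [c1]
  set l : ℤ := ((n:ℤ) + 1 - y + 1)/2 with hl
  set r : ℤ := ((n:ℤ) + 1 + y + 1)/2 with hr
  set l' : ℤ := ((n:ℤ) + 1 + d - y)/2 with hl'
  set r' : ℤ := ((n:ℤ) + 1 + d + y)/2 with hr'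
  have hpl : ((n:ℤ) - (y+1) + 1)/2 = l - 1 := by omega
  have hpr : ((n:ℤ) + (y+1) + 1)/2 = r := by omega
  have hql : ((n:ℤ) - (y-1) + 1)/2 = l := by omega
  have hqr : ((n:ℤ) + (y-1) + 1)/2 = r - 1 := by omega
  have hpl' : ((n:ℤ) + d - (y+1))/2 = l' - 1 := by omega
  have hpr' : ((n:ℤ) + d + (y+1))/2 = r' := by omega
  have hql' : ((n:ℤ) + d - (y-1))/2 = l' := by omega
  have hqr' : ((n:ℤ) + d + (y-1))/2 = r' - 1 := by omega
  rw [hpl, hpr, hql, hqr, hpl', hpr', hql', hqr']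
  rw [H_pascal hd, H_pascal hd]
  have hlr : l ≤ r := by omega
  have hlr' : l' ≤ r' := by omega
  have s1 := H_swap d n hlr
  have s2 := H_swap d n hlr'
  push_cast
  push_cast at s1 s2
  linarith
lemma binomZ_n_zero (z : ℤ) : binomZ 0 z = if z = 0 then 1 else 0 := by
  unfold binomZ
  rcases lt_trichotomy z 0 with h|h|h
  · rw [if_neg (by omega), if_neg (by omega)]
  · subst h; simp
  · rw [if_pos (by omega), if_neg (by omega)]
    have : z.toNat ≠ 0 := by omega
    obtain ⟨k, hk⟩ := Nat.exists_eq_succ_of_ne_zero this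
    rw [hk]; simp [Nat.choose]

lemma not_dvd_small {d : ℕ} {x : ℤ} (h : -(d:ℤ) < x) (h2 : x < d) (h3 : x ≠ 0) :
    ¬ (d:ℤ) ∣ x := by
  rintro ⟨k, rfl⟩
  have hd0 : (0:ℤ) ≤ d := Int.natCast_nonneg d
  rcases lt_trichotomy k 0 with hk|hk|hk
  · have : (d:ℤ) * k ≤ (d:ℤ) * (-1) := by
      apply mul_le_mul_of_nonneg_left (by omega) hd0
    omega
  · simp [hk] at h3
  · have : (d:ℤ) * 1 ≤ (d:ℤ) * k := by
      apply mul_le_mul_of_nonneg_left (by omega) hd0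
    omega

lemma T_zero_of_dvd {d : ℕ} (hd : 1 ≤ d) {x : ℤ} (h : (d:ℤ) ∣ x) : T d 0 x = 1 := by
  obtain ⟨k, rfl⟩ := h
  unfold T
  rw [finsum_eq_single _ (-k)]
  · rw [show (d:ℤ)*k + d*(-k) = 0 by ring, binomZ_n_zero]; simp
  · intro j hj
    rw [binomZ_n_zero, if_neg]
    rw [show (d:ℤ)*k + d*j = d*(k+j) by ring]
    exact mul_ne_zero (by exact_mod_cast (by omega : d ≠ 0)) (by omega)

lemma T_zero_of_not_dvd {d : ℕ} {x : ℤ} (h : ¬ (d:ℤ) ∣ x) : T d 0 x = 0 := by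
  unfold T
  apply finsum_eq_zero_of_forall_eq_zero
  intro j
  rw [binomZ_n_zero, if_neg]
  intro hc
  exact h ⟨-j, by rw [mul_neg]; omega⟩

lemma G_zero {d : ℕ} (hd : 2 ≤ d) {y : ℤ} (h0 : 0 ≤ y) (h1 : y ≤ (d:ℤ) - 2) :
    G d 0 y = 1 := by
  have hd1 : 1 ≤ d := by omega
  have hdcast : (2:ℤ) ≤ d := by exact_mod_cast hd
  unfold G
  have h₁ : H d 0 ((((0:ℕ):ℤ) - y + 1)/2) ((((0:ℕ):ℤ) + y + 1)/2) = 1 := by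
    unfold H
    rw [Finset.sum_eq_single_of_mem (0:ℤ)]
    · exact T_zero_of_dvd hd1 (dvd_zero _)
    · rw [Finset.mem_Icc]
      omega
    · intro x hx hne
      rw [Finset.mem_Icc] at hx
      exact T_zero_of_not_dvd (not_dvd_small (by omega) (by omega) hne)
  have h₂ : H d 0 ((((0:ℕ):ℤ) + d - y)/2) ((((0:ℕ):ℤ) + d + y)/2) = 0 := by
    unfold H
    apply Finset.sum_eq_zero
    intro x hx
    rw [Finset.mem_Icc] at hx
    exact T_zero_of_not_dvd (not_dvd_small (by omega) (by omega) (by omega))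
  rw [h₁, h₂]
  simp

def f (m : ℕ) : ℕ → ℕ → ℕ
  | 0, _ => 1
  | n+1, y => (if y + 1 ≤ m then f m n (y+1) else 0) +
      (if 1 ≤ y ∧ y - 1 ≤ m then f m n (y-1) else 0)

lemma f_eq_G {d : ℕ} (hd : 2 ≤ d) : ∀ n (y : ℕ), (y:ℤ) ≤ (d:ℤ) - 2 →
    (f (d-2) n y : ℤ) = G d n y := by
  have hdcast : (2:ℤ) ≤ d := by exact_mod_cast hd
  have hmcast : ((d-2:ℕ):ℤ) = (d:ℤ) - 2 := by omega
  intro n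
  induction n with
  | zero =>
      intro y hy
      rw [show f (d-2) 0 y = 1 from rfl]
      rw [G_zero hd (by positivity) hy]
      simp
  | succ n ih =>
      intro y hy
      rw [show f (d-2) (n+1) y = (if y + 1 ≤ d-2 then f (d-2) n (y+1) else 0) +
          (if 1 ≤ y ∧ y - 1 ≤ d-2 then f (d-2) n (y-1) else 0) from rfl]
      rw [G_rec (by omega) n (by positivity : (0:ℤ) ≤ (y:ℤ))]
      have hup : ((if y + 1 ≤ d-2 then f (d-2) n (y+1) else 0 : ℕ) : ℤ) = G d n ((y:ℤ)+1) := by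
        by_cases h : y + 1 ≤ d - 2
        · rw [if_pos h]
          have := ih (y+1) (by push_cast; omega)
          rw [this]; push_cast; ring_nf
        · rw [if_neg h]
          have hy1 : (y:ℤ) + 1 = (d:ℤ) - 1 := by omega
          rw [hy1, G_top hd]
          simp
      have hdn : ((if 1 ≤ y ∧ y - 1 ≤ d-2 then f (d-2) n (y-1) else 0 : ℕ) : ℤ) = G d n ((y:ℤ)-1) := by
        by_cases h : 1 ≤ y
        · rw [if_pos ⟨h, by omega⟩]
          have := ih (y-1) (by omega)
          rw [this]
          congr 1
          omega
        · rw [if_neg (by omega)]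
          have hy1 : (y:ℤ) - 1 = -1 := by omega
          rw [hy1, G_neg_one]
          simp
      push_cast
      push_cast at hup hdn
      rw [hup, hdn]
def Cond (m k : ℕ) (z : ℤ) (s : Fin k → ℤ) : Prop :=
  (∀ i, s i = 1 ∨ s i = -1) ∧
    ∀ j : Fin k, 0 ≤ z + ∑ i ∈ Finset.Iic j, s i ∧ z + ∑ i ∈ Finset.Iic j, s i ≤ (m:ℤ)

lemma corridorCount_eq (m n y0 : ℕ) :
    corridorCount m n y0 = Nat.card {r : Fin n → ℤ // Cond m n (y0:ℤ) r} := rfl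

lemma finite_pm {k : ℕ} {P : (Fin k → ℤ) → Prop} (hP : ∀ s, P s → ∀ i, s i = 1 ∨ s i = -1) :
    Finite {s : Fin k → ℤ // P s} := by
  apply Finite.of_injective (fun r : {s // P s} => fun i => decide (r.1 i = 1))
  intro a b h
  apply Subtype.ext
  funext i
  have hi := congrFun h i
  rcases hP _ a.2 i with ha | ha <;> rcases hP _ b.2 i with hb | hb <;>
    simpa [ha, hb] using hi

lemma Iic_zero_sum {n : ℕ} (r : Fin (n+1) → ℤ) :
    ∑ i ∈ Finset.Iic (0 : Fin (n+1)), r i = r 0 := by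
  rw [show Finset.Iic (0 : Fin (n+1)) = {0} by
    ext x; simp [Finset.mem_Iic, Fin.le_zero_iff]]
  simp

lemma Iic_succ_sum {n : ℕ} (r : Fin (n+1) → ℤ) (j : Fin n) :
    ∑ i ∈ Finset.Iic j.succ, r i = r 0 + ∑ i ∈ Finset.Iic j, Fin.tail r i := by
  have hins : Finset.Iic j.succ = insert 0 ((Finset.Iic j).map (Fin.succEmb n)) := by
    ext x
    simp only [Finset.mem_Iic, Finset.mem_insert, Finset.mem_map, Fin.coe_succEmb]
    induction x using Fin.cases with
    | zero => simp [Fin.zero_le]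
    | succ y =>
        simp only [Fin.succ_le_succ_iff, Fin.succ_ne_zero, false_or]
        constructor
        · intro hle; exact ⟨y, hle, rfl⟩
        · rintro ⟨z, hz, hzy⟩
          rw [← Fin.succ_injective n hzy]
          exact hz
  rw [hins, Finset.sum_insert (by simp [Fin.succ_ne_zero]), Finset.sum_map]
  rfl

lemma cond_succ_iff (m n : ℕ) (z : ℤ) (r : Fin (n+1) → ℤ) :
    Cond m (n+1) z r ↔ (r 0 = 1 ∨ r 0 = -1) ∧ (0 ≤ z + r 0 ∧ z + r 0 ≤ (m:ℤ)) ∧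
      Cond m n (z + r 0) (Fin.tail r) := by
  unfold Cond
  rw [Fin.forall_fin_succ (P := fun i => r i = 1 ∨ r i = -1)]
  rw [Fin.forall_fin_succ (P := fun j => 0 ≤ z + ∑ i ∈ Finset.Iic j, r i ∧
    z + ∑ i ∈ Finset.Iic j, r i ≤ (m:ℤ))]
  simp only [Iic_zero_sum, Iic_succ_sum]
  constructor
  · rintro ⟨⟨h00, htail⟩, ⟨h0, hrest⟩⟩
    refine ⟨h00, h0, htail, fun j => ?_⟩
    have := hrest j
    constructor <;> linarith [this.1, this.2]
  · rintro ⟨h00, h0, htail, hrest⟩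
    refine ⟨⟨h00, htail⟩, ⟨h0, fun j => ?_⟩⟩
    have := hrest j
    constructor <;> linarith [this.1, this.2]
noncomputable def stepEquiv (m n y0 : ℕ) :
    {r : Fin (n+1) → ℤ // Cond m (n+1) (y0:ℤ) r} ≃
      ({s : Fin n → ℤ // ((y0:ℤ) + 1 ≤ (m:ℤ)) ∧ Cond m n ((y0:ℤ)+1) s} ⊕
       {s : Fin n → ℤ // ((0:ℤ) ≤ (y0:ℤ) - 1 ∧ (y0:ℤ) - 1 ≤ (m:ℤ)) ∧
          Cond m n ((y0:ℤ)-1) s}) where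
  toFun r :=
    if h : r.1 0 = 1 then
      Sum.inl ⟨Fin.tail r.1, by
        have hc := (cond_succ_iff m n (y0:ℤ) r.1).mp r.2
        rw [h] at hc
        exact ⟨hc.2.1.2, hc.2.2⟩⟩
    else
      Sum.inr ⟨Fin.tail r.1, by
        have hc := (cond_succ_iff m n (y0:ℤ) r.1).mp r.2
        have h' : r.1 0 = -1 := hc.1.resolve_left h
        rw [h'] at hc
        refine ⟨⟨by linarith [hc.2.1.1], by linarith [hc.2.1.2]⟩, ?_⟩
        have : (y0:ℤ) - 1 = (y0:ℤ) + (-1) := by ring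
        rw [this]
        exact hc.2.2⟩
  invFun :=
    Sum.elim (fun s => ⟨Fin.cons 1 s.1, by
        rw [cond_succ_iff]
        rw [Fin.cons_zero, Fin.tail_cons]
        exact ⟨Or.inl rfl, ⟨by positivity, s.2.1⟩, s.2.2⟩⟩)
      (fun s => ⟨Fin.cons (-1) s.1, by
        rw [cond_succ_iff]
        rw [Fin.cons_zero, Fin.tail_cons]
        refine ⟨Or.inr rfl, ⟨by linarith [s.2.1.1], by linarith [s.2.1.2]⟩, ?_⟩
        have : (y0:ℤ) + (-1) = (y0:ℤ) - 1 := by ring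
        rw [this]
        exact s.2.2⟩)
  left_inv r := by
    dsimp only
    by_cases h : r.1 0 = 1
    · rw [dif_pos h]
      apply Subtype.ext
      show Fin.cons 1 (Fin.tail r.1) = r.1
      rw [← h]
      exact Fin.cons_self_tail r.1
    · rw [dif_neg h]
      apply Subtype.ext
      show Fin.cons (-1) (Fin.tail r.1) = r.1
      have hc := (cond_succ_iff m n (y0:ℤ) r.1).mp r.2
      have h' : r.1 0 = -1 := hc.1.resolve_left h
      rw [← h']
      exact Fin.cons_self_tail r.1
  right_inv s := by
    rcases s with s | s
    · dsimp only [Sum.elim_inl]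
      rw [dif_pos (show (Fin.cons (1:ℤ) s.1 : Fin (n+1) → ℤ) 0 = 1 from Fin.cons_zero _ _)]
      congr 1
    · dsimp only [Sum.elim_inr]
      rw [dif_neg (show ¬((Fin.cons (-1:ℤ) s.1 : Fin (n+1) → ℤ) 0 = 1) by
        rw [Fin.cons_zero]; norm_num)]
      congr 1

lemma card_if {α : Type*} (p : Prop) [Decidable p] (Q : α → Prop) :
    Nat.card {x : α // p ∧ Q x} = if p then Nat.card {x // Q x} else 0 := by
  by_cases h : p
  · rw [if_pos h]
    exact Nat.card_congr (Equiv.subtypeEquivRight (fun x => by simp [h]))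
  · rw [if_neg h]
    have : IsEmpty {x : α // p ∧ Q x} := ⟨fun x => h x.2.1⟩
    exact Nat.card_of_isEmpty

lemma corridor_zero (m y0 : ℕ) : corridorCount m 0 y0 = 1 := by
  rw [corridorCount_eq]
  have huniv : ∀ r : Fin 0 → ℤ, Cond m 0 (y0:ℤ) r :=
    fun r => ⟨fun i => i.elim0, fun j => j.elim0⟩
  rw [Nat.card_congr (Equiv.subtypeUnivEquiv huniv)]
  exact Nat.card_unique

lemma corridor_eq_f (m : ℕ) : ∀ n y0, corridorCount m n y0 = f m n y0 := by
  intro n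
  induction n with
  | zero => intro y0; rw [corridor_zero]; rfl
  | succ n ih =>
    intro y0
    have fin1 : Finite {s : Fin n → ℤ // ((y0:ℤ) + 1 ≤ (m:ℤ)) ∧ Cond m n ((y0:ℤ)+1) s} :=
      finite_pm (fun s hs => hs.2.1)
    have fin2 : Finite {s : Fin n → ℤ // ((0:ℤ) ≤ (y0:ℤ) - 1 ∧ (y0:ℤ) - 1 ≤ (m:ℤ)) ∧
        Cond m n ((y0:ℤ)-1) s} := finite_pm (fun s hs => hs.2.1)
    rw [corridorCount_eq, Nat.card_congr (stepEquiv m n y0), Nat.card_sum]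
    rw [card_if, card_if]
    rw [show f m (n+1) y0 = (if y0 + 1 ≤ m then f m n (y0+1) else 0) +
      (if 1 ≤ y0 ∧ y0 - 1 ≤ m then f m n (y0-1) else 0) from rfl]
    congr 1
    · by_cases h : y0 + 1 ≤ m
      · rw [if_pos (by exact_mod_cast h), if_pos h, ← ih]
        rw [corridorCount_eq]
        have : ((y0+1:ℕ):ℤ) = (y0:ℤ) + 1 := by push_cast; ring
        rw [this]
      · rw [if_neg (by omega), if_neg h]
    · by_cases h : 1 ≤ y0 ∧ y0 - 1 ≤ m
      · rw [if_pos (by omega), if_pos h, ← ih]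
        rw [corridorCount_eq]
        have : ((y0-1:ℕ):ℤ) = (y0:ℤ) - 1 := by omega
        rw [this]
      · rw [if_neg (by omega), if_neg h]

lemma circPascal_eq_T (d n : ℕ) (k : ℤ) : circPascal d 0 n k = T d n k := by
  unfold circPascal T
  rw [Finset.sum_range_one]
  norm_num

theorem corridor_eq_circPascal_diff_std (d : ℕ) (hd : 2 ≤ d) (n : ℕ) :
    (corridorCount (d - 2) n 0 : ℤ) =
      (circPascal d 0 n ((n / 2 : ℕ) : ℤ) : ℤ) -
      (circPascal d 0 n (((n + d) / 2 : ℕ) : ℤ) : ℤ) := by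
  have hdcast : (2:ℤ) ≤ (d:ℤ) := by exact_mod_cast hd
  have hfG := f_eq_G hd n 0 (by omega)
  rw [Nat.cast_zero] at hfG
  rw [corridor_eq_f (d-2) n 0, hfG]
  unfold G
  have e1 : ((n:ℤ) - 0 + 1)/2 = ((n:ℤ) + 0 + 1)/2 := by omega
  have e2 : ((n:ℤ) + d - 0)/2 = ((n:ℤ) + d + 0)/2 := by omega
  rw [e1, e2]
  have hsing : ∀ a : ℤ, H d n a a = T d n a := by
    intro a
    unfold H
    rw [Finset.Icc_self, Finset.sum_singleton]
  rw [hsing, hsing]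
  rw [circPascal_eq_T, circPascal_eq_T]
  have hT1 : T d n (((n:ℤ) + 0 + 1)/2) = T d n ((n/2 : ℕ) : ℤ) := by
    rw [T_symm d n (((n:ℤ) + 0 + 1)/2)]
    have e : (n:ℤ) - ((n:ℤ) + 0 + 1)/2 = ((n/2 : ℕ) : ℤ) := by omega
    rw [e]
  have hT2 : T d n (((n:ℤ) + d + 0)/2) = T d n (((n+d)/2 : ℕ) : ℤ) := by
    have e : ((n:ℤ) + d + 0)/2 = (((n+d)/2 : ℕ) : ℤ) := by omega
    rw [e]
  rw [hT1, hT2]
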